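/- Let X be a topological space, n ≥ 2 an integer, and W₁, …, W_n open subsets of X with ∩ᵢ₌₁ⁿ Wᵢ = ∅. For i = 1, …, n and j = 1, …, n−1 let Wᵢʲ and Uᵢʲ be open sets with Wᵢʲ ⊂⊂ Uᵢʲ for all j and Uᵢ¹ ⊂⊂ Wᵢ² ⊂⊂ Uᵢ² ⊂⊂ ⋯ ⊂⊂ Wᵢⁿ⁻¹ ⊂⊂ Uᵢⁿ⁻¹ ⊂⊂ Wᵢ. Let 𝒩 be the collection of nonempty subsets I ⊆ {1, …, n} with W_I := ∩_{i∈I} Wᵢ ≠ ∅, and for I ∈ 𝒩 with |I| = k define V_I := (∩_{i∈I} Wᵢᵏ) \ (∪_{J ⊆ {1,…,n}, |J| > k} ∩_{j∈J} Cl(U_jᵏ)). Then: (i) each V_I is open and V_I ⊆ W_I; (ii) the family {V_I : I ∈ 𝒩} covers ∪ᵢ₌₁ⁿ Wᵢ¹; (iii) for I, J ∈ 𝒩, if Cl(V_I) ∩ V_J ≠ ∅ then I ⊆ J or J ⊆ I. -/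

import Mathlib

open Set

/-- The set `V_I` of the Liu–Tian renormalization construction (formula (2.65) of the paper):
for a finite index set `I` with `k = |I|`,
`V_I = (⋂_{i ∈ I} Wᵢᵏ) \ ⋃_{|J| > k} ⋂_{j ∈ J} Cl(Uⱼᵏ)`. -/
def renormV {X : Type*} [TopologicalSpace X] {n : ℕ} (W' U' : Fin n → ℕ → Set X)
    (I : Finset (Fin n)) : Set X :=
  (⋂ i ∈ I, W' i I.card) \
    ⋃ (J : Finset (Fin n)) (_ : I.card < J.card), ⋂ j ∈ J, closure (U' j I.card)

/-- **Lemma 2.31** (the renormalization covering lemma of Liu–Tian). Let `W₁, …, W_n` (`n ≥ 2`)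
be open subsets of a topological space `X` with `⋂ᵢ Wᵢ = ∅`, and let
`Wᵢʲ ⊂⊂ Uᵢʲ`, `Uᵢ¹ ⊂⊂ Wᵢ² ⊂⊂ Uᵢ² ⊂⊂ ⋯ ⊂⊂ Wᵢⁿ⁻¹ ⊂⊂ Uᵢⁿ⁻¹ ⊂⊂ Wᵢ` be nested open sets.
Then, with `𝒩` the collection of nonempty `I` with `W_I = ⋂_{i ∈ I} Wᵢ ≠ ∅`:
(i) each `V_I` (`I ∈ 𝒩`) is open and `V_I ⊆ W_I`; (ii) `{V_I : I ∈ 𝒩}` covers `⋃ᵢ Wᵢ¹`;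
(iii) if `Cl(V_I) ∩ V_J ≠ ∅` for `I, J ∈ 𝒩` then `I ⊆ J` or `J ⊆ I`. -/
theorem renormalization_covering
    {X : Type*} [TopologicalSpace X] {n : ℕ} (hn : 2 ≤ n)
    (W : Fin n → Set X) (hWopen : ∀ i, IsOpen (W i))
    (hWinter : ⋂ i, W i = ∅)
    (W' U' : Fin n → ℕ → Set X)
    (hW'open : ∀ i j, 1 ≤ j → j ≤ n - 1 → IsOpen (W' i j))
    (hU'open : ∀ i j, 1 ≤ j → j ≤ n - 1 → IsOpen (U' i j))
    (hWU : ∀ i j, 1 ≤ j → j ≤ n - 1 → closure (W' i j) ⊆ U' i j)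
    (hUW : ∀ i j, 1 ≤ j → j + 1 ≤ n - 1 → closure (U' i j) ⊆ W' i (j + 1))
    (hUtop : ∀ i, closure (U' i (n - 1)) ⊆ W i) :
    (∀ I : Finset (Fin n), I.Nonempty → (⋂ i ∈ I, W i).Nonempty →
        IsOpen (renormV W' U' I) ∧ renormV W' U' I ⊆ ⋂ i ∈ I, W i) ∧
      (∀ x ∈ ⋃ i, W' i 1,
        ∃ I : Finset (Fin n), I.Nonempty ∧ (⋂ i ∈ I, W i).Nonempty ∧ x ∈ renormV W' U' I) ∧
      ∀ I J : Finset (Fin n), I.Nonempty → (⋂ i ∈ I, W i).Nonempty →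
        J.Nonempty → (⋂ i ∈ J, W i).Nonempty →
        (closure (renormV W' U' I) ∩ renormV W' U' J).Nonempty → I ⊆ J ∨ J ⊆ I := by

  classical
  have hn1 : 1 ≤ n - 1 := by omega
  -- closure (U' i k) ⊆ W i for 1 ≤ k ≤ n-1
  have clUW0 : ∀ (i : Fin n) (d k : ℕ), 1 ≤ k → k + d = n - 1 → closure (U' i k) ⊆ W i := by
    intro i d
    induction d with
    | zero =>
      intro k h1 hd
      have : k = n - 1 := by omega
      subst this
      exact hUtop i
    | succ d ih =>
      intro k h1 hd
      calc closure (U' i k) ⊆ W' i (k + 1) := hUW i k h1 (by omega)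
        _ ⊆ closure (W' i (k + 1)) := subset_closure
        _ ⊆ U' i (k + 1) := hWU i (k + 1) (by omega) (by omega)
        _ ⊆ closure (U' i (k + 1)) := subset_closure
        _ ⊆ W i := ih (k + 1) (by omega) (by omega)
  have clUW : ∀ (i : Fin n) (k : ℕ), 1 ≤ k → k ≤ n - 1 → closure (U' i k) ⊆ W i :=
    fun i k h1 h2 => clUW0 i (n - 1 - k) k h1 (by omega)
  have WsubW : ∀ (i : Fin n) (k : ℕ), 1 ≤ k → k ≤ n - 1 → W' i k ⊆ W i := fun i k h1 h2 =>
    subset_closure.trans ((hWU i k h1 h2).trans (subset_closure.trans (clUW i k h1 h2)))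
  have clUmono : ∀ (i : Fin n) (a b : ℕ), 1 ≤ a → a ≤ b → b ≤ n - 1 →
      closure (U' i a) ⊆ closure (U' i b) := by
    intro i a b h1 hab hb
    induction b, hab using Nat.le_induction with
    | base => exact subset_rfl
    | succ b hab ih =>
      calc closure (U' i a) ⊆ closure (U' i b) := ih (by omega)
        _ ⊆ W' i (b + 1) := hUW i b (by omega) hb
        _ ⊆ closure (W' i (b + 1)) := subset_closure
        _ ⊆ U' i (b + 1) := hWU i (b + 1) (by omega) hb
        _ ⊆ closure (U' i (b + 1)) := subset_closure
  have cardle : ∀ I : Finset (Fin n), (⋂ i ∈ I, W i).Nonempty → I.card ≤ n - 1 := by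
    intro I hI
    by_contra h
    have hle : I.card ≤ n := by
      have := I.card_le_univ
      simpa using this
    have hcard : I.card = n := by omega
    have hIu : I = Finset.univ := Finset.eq_univ_of_card I (by simpa using hcard)
    obtain ⟨x, hx⟩ := hI
    have : x ∈ ⋂ i, W i := by
      rw [mem_iInter]
      intro i
      exact (mem_iInter₂.mp hx) i (hIu ▸ Finset.mem_univ i)
    rw [hWinter] at this
    exact this
  have hVopen : ∀ I : Finset (Fin n), I.Nonempty → (⋂ i ∈ I, W i).Nonempty →
      IsOpen (renormV W' U' I) := by
    intro I hne hWI
    have h1 : 1 ≤ I.card := hne.card_pos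
    have h2 : I.card ≤ n - 1 := cardle I hWI
    apply IsOpen.sdiff
    · exact isOpen_biInter_finset fun i _ => hW'open i I.card h1 h2
    · apply isClosed_iUnion_of_finite
      intro J
      apply isClosed_iUnion_of_finite
      intro _
      exact isClosed_biInter fun j _ => isClosed_closure
  have hVsub : ∀ I : Finset (Fin n), I.Nonempty → (⋂ i ∈ I, W i).Nonempty →
      renormV W' U' I ⊆ ⋂ i ∈ I, W i := by
    intro I hne hWI x hx
    have h1 : 1 ≤ I.card := hne.card_pos
    have h2 : I.card ≤ n - 1 := cardle I hWI
    rw [mem_iInter₂]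
    intro i hi
    exact WsubW i I.card h1 h2 (mem_iInter₂.mp hx.1 i hi)
  refine ⟨fun I hne hWI => ⟨hVopen I hne hWI, hVsub I hne hWI⟩, ?_, ?_⟩
  · -- coverage
    intro x hx
    obtain ⟨i0, hi0⟩ := mem_iUnion.mp hx
    set A : ℕ → Finset (Fin n) := fun k =>
      Finset.univ.filter (fun i => x ∈ closure (U' i k)) with hA
    have hAmem : ∀ (k : ℕ) (i : Fin n), i ∈ A k ↔ x ∈ closure (U' i k) := by
      intro k i; simp [hA]
    have hAn : (A (n - 1)).card ≤ n - 1 := by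
      by_contra h
      have hle : (A (n - 1)).card ≤ n := by
        have := (A (n - 1)).card_le_univ
        simpa using this
      have hAu : A (n - 1) = Finset.univ :=
        Finset.eq_univ_of_card _ (by rw [Fintype.card_fin]; omega)
      have hxW : ∀ i : Fin n, x ∈ W i := fun i =>
        clUW i (n - 1) hn1 le_rfl ((hAmem _ i).mp (hAu ▸ Finset.mem_univ i))
      have : x ∈ ⋂ i, W i := mem_iInter.mpr hxW
      rw [hWinter] at this
      exact this
    have hex : ∃ k, 1 ≤ k ∧ (A k).card ≤ k := ⟨n - 1, hn1, hAn⟩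
    set k := Nat.find hex with hk
    obtain ⟨hk1, hAk⟩ : 1 ≤ k ∧ (A k).card ≤ k := Nat.find_spec hex
    have kle : k ≤ n - 1 := Nat.find_min' hex ⟨hn1, hAn⟩
    have hB : ∃ B : Finset (Fin n), k ≤ B.card ∧ ∀ i ∈ B, x ∈ W' i k := by
      rcases eq_or_lt_of_le hk1 with h1 | h1
      · refine ⟨{i0}, by simp [← h1], ?_⟩
        intro i hi
        rw [Finset.mem_singleton] at hi
        subst hi
        rw [← h1]
        exact hi0
      · have hmin : ¬ (1 ≤ k - 1 ∧ (A (k - 1)).card ≤ k - 1) := Nat.find_min hex (by omega)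
        have hcard : k ≤ (A (k - 1)).card := by
          by_contra hc
          exact hmin ⟨by omega, by omega⟩
        refine ⟨A (k - 1), hcard, ?_⟩
        intro i hi
        have hxc : x ∈ closure (U' i (k - 1)) := (hAmem _ i).mp hi
        have := hUW i (k - 1) (by omega) (by omega) hxc
        simpa [Nat.sub_add_cancel hk1] using this
    obtain ⟨B, hBcard, hBW⟩ := hB
    obtain ⟨I, hIB, hIcard⟩ := Finset.exists_subset_card_eq hBcard
    have hIne : I.Nonempty := Finset.card_pos.mp (by omega)
    have hxWk : ∀ i ∈ I, x ∈ W' i k := fun i hi => hBW i (hIB hi)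
    refine ⟨I, hIne, ⟨x, mem_iInter₂.mpr fun i hi => WsubW i k hk1 kle (hxWk i hi)⟩, ?_, ?_⟩
    · rw [hIcard]
      exact mem_iInter₂.mpr hxWk
    · rw [hIcard]
      intro hmem
      simp only [mem_iUnion] at hmem
      obtain ⟨J, hJcard, hJ⟩ := hmem
      have hJA : J ⊆ A k := by
        intro j hj
        exact (hAmem k j).mpr (mem_iInter₂.mp hJ j hj)
      have := Finset.card_le_card hJA
      omega
  · -- (iii)
    rintro I J hIne hWI hJne hWJ ⟨x, hxI, hxJ⟩
    have hk1 : 1 ≤ I.card := hIne.card_pos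
    have hl1 : 1 ≤ J.card := hJne.card_pos
    have kle : I.card ≤ n - 1 := cardle I hWI
    have lle : J.card ≤ n - 1 := cardle J hWJ
    rcases le_or_gt I.card J.card with hkl | hlk
    · left
      by_contra hns
      have hIJ : J ⊂ I ∪ J := by
        rw [Finset.ssubset_def]
        exact ⟨Finset.subset_union_right, fun hsub =>
          hns fun i hi => hsub (Finset.mem_union_left J hi)⟩
      have hcard : J.card < (I ∪ J).card := Finset.card_lt_card hIJ
      have hxcl : ∀ i ∈ I ∪ J, x ∈ closure (U' i J.card) := by
        intro i hi
        rcases Finset.mem_union.mp hi with hi | hi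
        · have hsub : renormV W' U' I ⊆ W' i I.card := fun y hy => mem_iInter₂.mp hy.1 i hi
          have h1 : x ∈ closure (W' i I.card) := closure_mono hsub hxI
          have h2 : x ∈ U' i I.card := hWU i I.card hk1 kle h1
          exact clUmono i I.card J.card hk1 hkl lle (subset_closure h2)
        · have h1 : x ∈ W' i J.card := mem_iInter₂.mp hxJ.1 i hi
          exact subset_closure (hWU i J.card hl1 lle (subset_closure h1))
      exact hxJ.2 (mem_iUnion.mpr ⟨I ∪ J, mem_iUnion.mpr ⟨hcard, mem_iInter₂.mpr hxcl⟩⟩)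
    · right
      by_contra hns
      obtain ⟨y, hyJ, hyI⟩ :=
        mem_closure_iff.mp hxI (renormV W' U' J) (hVopen J hJne hWJ) hxJ
      have hIJ : I ⊂ I ∪ J := by
        rw [Finset.ssubset_def]
        exact ⟨Finset.subset_union_left, fun hsub =>
          hns fun j hj => hsub (Finset.mem_union_right I hj)⟩
      have hcard : I.card < (I ∪ J).card := Finset.card_lt_card hIJ
      have hycl : ∀ i ∈ I ∪ J, y ∈ closure (U' i I.card) := by
        intro i hi
        rcases Finset.mem_union.mp hi with hi | hi
        · have h1 : y ∈ W' i I.card := mem_iInter₂.mp hyI.1 i hi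
          exact subset_closure (hWU i I.card hk1 kle (subset_closure h1))
        · have h1 : y ∈ W' i J.card := mem_iInter₂.mp hyJ.1 i hi
          have h2 : y ∈ closure (U' i J.card) :=
            subset_closure (hWU i J.card hl1 lle (subset_closure h1))
          exact clUmono i J.card I.card hl1 (le_of_lt hlk) kle h2
      exact hyI.2 (mem_iUnion.mpr ⟨I ∪ J, mem_iUnion.mpr ⟨hcard, mem_iInter₂.mpr hycl⟩⟩)
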